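/- arXiv:1102.5389 — 2 statements merged into one kernel-verified Lean document; each statement's English description precedes it below -/
import Mathlib

section
/- (Strips Theorem, one-sided tape) Let f be a partial function on natural numbers computed by a one-sided Turing machine with binary input/output convention (the tape is infinite to the left and bounded on the right, the natural number input is written in binary on the rightmost cells, and the output is the binary number on the tape at halting). If f halts on input i and n is the index of the left-most cell visited during the computation on input i, then for every natural number x, f(x·2^(n+1) + i) = x·2^(n+1) + f(i). In particular, f restricted to the arithmetic progression {x·2^(n+1) + i : x ∈ ℕ} is of the form y ↦ y + a with a = f(i) − i. -/
/-- A one-sided Turing machine: transition table mapping (state, color) to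
(written color, move-right?, next state), plus an initial state.
The tape is infinite to the left: cells are indexed by `ℕ` with cell 0 the rightmost;
moving right decreases the index, and moving right from cell 0 halts the machine. -/
structure TM (σ : Type) where
  trans : σ → Bool → Bool × Bool × σ
  init : σ

/-- A configuration: current state, head position, tape contents. -/
structure Cfg (σ : Type) where
  state : σ
  pos : ℕ
  tape : ℕ → Bool

/-- One step of the machine: either a new configuration, or (if the head moves
right off cell 0) the final tape. -/
def TM.stepA {σ : Type} (M : TM σ) (c : Cfg σ) : Sum (Cfg σ) (ℕ → Bool) :=
  let r := M.trans c.state (c.tape c.pos)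
  let tape' := Function.update c.tape c.pos r.1
  if r.2.1 then
    if c.pos = 0 then Sum.inr tape'
    else Sum.inl ⟨r.2.2, c.pos - 1, tape'⟩
  else Sum.inl ⟨r.2.2, c.pos + 1, tape'⟩

/-- Running the machine for `t` steps from a configuration; once halted, the
final tape is kept. -/
def TM.run {σ : Type} (M : TM σ) (c : Cfg σ) : ℕ → Sum (Cfg σ) (ℕ → Bool)
  | 0 => Sum.inl c
  | t + 1 =>
    match M.run c t with
    | Sum.inl c' => M.stepA c'
    | Sum.inr tp => Sum.inr tp

/-- Initial configuration on binary input `i`: head at cell 0, cell `j` holds the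
`j`-th binary digit of `i`. -/
def initCfg {σ : Type} (M : TM σ) (i : ℕ) : Cfg σ :=
  ⟨M.init, 0, fun j => i.testBit j⟩

/-- `M` halts on binary input `i` with binary output `r`. -/
def ComputesOn {σ : Type} (M : TM σ) (i r : ℕ) : Prop :=
  ∃ t tp, M.run (initCfg M i) t = Sum.inr tp ∧ ∀ j, tp j = r.testBit j

/-- Initial configuration on unary input `x`: a block of `x+1` black cells at the
right end of the tape. -/
def unaryCfg {σ : Type} (M : TM σ) (x : ℕ) : Cfg σ :=
  ⟨M.init, 0, fun j => decide (j < x + 1)⟩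

/-- (Strips Theorem, one-sided tape.) If a one-sided Turing machine with binary
input/output convention halts on input `i` with output `r`, and every cell visited
during that computation has index at most `n`, then for every `x` the machine halts
on input `x·2^(n+1) + i` with output `x·2^(n+1) + r`; in particular, on the strip
`{x·2^(n+1) + i : x ∈ ℕ}` the computed function is of the form `y ↦ y + a` with
`a = f(i) − i`. -/
theorem strips_theorem_one_sided {σ : Type} (M : TM σ) (i r n : ℕ)
    (hhalt : ComputesOn M i r)
    (hvisited : ∀ t c, M.run (initCfg M i) t = Sum.inl c → c.pos ≤ n) :
    ∀ x : ℕ, ComputesOn M (x * 2 ^ (n + 1) + i) (x * 2 ^ (n + 1) + r) := by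
  -- helper arithmetic lemmas
  have tb_div : ∀ a k j : ℕ, (a / 2 ^ k).testBit j = a.testBit (k + j) := by
    intro a k j
    simp [Nat.testBit_eq_decide_div_mod_eq, Nat.div_div_eq_div_mul, pow_add]
  have tb_low : ∀ x a j : ℕ, j ≤ n → (x * 2 ^ (n + 1) + a).testBit j = a.testBit j := by
    intro x a j hj
    have h1 : (x * 2 ^ (n + 1) + a) % 2 ^ (n + 1) = a % 2 ^ (n + 1) := by
      simp [Nat.add_comm, Nat.add_mul_mod_self_right]
    have h2 := Nat.testBit_mod_two_pow (x * 2 ^ (n + 1) + a) (n + 1) j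
    have h3 := Nat.testBit_mod_two_pow a (n + 1) j
    rw [h1, h3] at h2
    simpa [Nat.lt_succ_of_le hj] using h2.symm
  have tb_div_add : ∀ x a : ℕ, (x * 2 ^ (n + 1) + a) / 2 ^ (n + 1) = x + a / 2 ^ (n + 1) := by
    intro x a
    rw [Nat.add_comm, Nat.add_mul_div_right _ _ (Nat.two_pow_pos _), Nat.add_comm]
  set f : ℕ → Bool := fun j => i.testBit j with hfdef
  -- merge lemma
  have key : ∀ (g : ℕ → Bool) (t : ℕ),
      (M.run (⟨M.init, 0, f⟩ : Cfg σ) t).elim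
        (fun c => M.run (⟨M.init, 0, fun j => if j ≤ n then f j else g j⟩ : Cfg σ) t
          = Sum.inl ⟨c.state, c.pos, fun j => if j ≤ n then c.tape j else g j⟩)
        (fun tp => M.run (⟨M.init, 0, fun j => if j ≤ n then f j else g j⟩ : Cfg σ) t
          = Sum.inr (fun j => if j ≤ n then tp j else g j)) := by
    intro g t
    induction t with
    | zero => simp [TM.run]
    | succ t ih =>
      rcases hr : M.run (⟨M.init, 0, f⟩ : Cfg σ) t with c | tp
      · obtain ⟨cs, cp, ct⟩ := c
        set c : Cfg σ := ⟨cs, cp, ct⟩ with hc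
        rw [hr] at ih
        simp only [Sum.elim_inl] at ih
        have hpos : c.pos ≤ n := hvisited t c hr
        have hupd : ∀ v : Bool,
            (fun j => if j ≤ n then (Function.update c.tape c.pos v) j else g j)
            = Function.update (fun j => if j ≤ n then c.tape j else g j) c.pos v := by
          intro v
          funext j
          by_cases hj : j = c.pos
          · subst hj; rw [Function.update_self, Function.update_self, if_pos hpos]
          · simp [Function.update_of_ne hj]
        have horig : M.run (⟨M.init, 0, f⟩ : Cfg σ) (t + 1) = M.stepA c := by
          rw [TM.run, hr]
        have hmerge : M.run (⟨M.init, 0, fun j => if j ≤ n then f j else g j⟩ : Cfg σ) (t + 1)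
            = M.stepA ⟨c.state, c.pos, fun j => if j ≤ n then c.tape j else g j⟩ := by
          rw [TM.run, ih]
        have hstep : M.stepA (⟨c.state, c.pos, fun j => if j ≤ n then c.tape j else g j⟩ : Cfg σ)
            = (M.stepA c).elim
                (fun c' => Sum.inl ⟨c'.state, c'.pos, fun j => if j ≤ n then c'.tape j else g j⟩)
                (fun tp => Sum.inr (fun j => if j ≤ n then tp j else g j)) := by
          simp only [hc] at hpos hupd ⊢
          unfold TM.stepA
          by_cases hm : (M.trans cs (ct cp)).2.1 = true <;>
            by_cases h0 : cp = 0
          · subst h0; simp [hm, hupd]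
          · simp [hm, h0, hpos, hupd]
          · subst h0; simp [hm, hupd]
          · simp [hm, h0, hpos, hupd]
        rw [horig, hmerge, hstep]
        rcases M.stepA c with c' | tp' <;> simp
      · rw [hr] at ih
        simp only [Sum.elim_inr] at ih
        have hs : M.run (⟨M.init, 0, f⟩ : Cfg σ) (t + 1) = Sum.inr tp := by
          rw [TM.run, hr]
        rw [hs]
        simp only [Sum.elim_inr, TM.run, ih]
  obtain ⟨t0, tp, hrun, htp⟩ := hhalt
  have hinit : initCfg M i = (⟨M.init, 0, f⟩ : Cfg σ) := rfl
  rw [hinit] at hrun hvisited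
  -- high bits of tp agree with f (apply key with g = f)
  have hself := key f t0
  rw [hrun] at hself
  simp only [Sum.elim_inr] at hself
  have hff : (fun j => if j ≤ n then f j else f j) = f := by funext j; simp
  rw [hff, hrun] at hself
  have htp_high : ∀ j, n < j → tp j = f j := by
    intro j hj
    have := congrFun (Sum.inr.inj hself) j
    simpa [Nat.not_le_of_lt hj] using this
  -- i and r have the same high bits
  have hir : i / 2 ^ (n + 1) = r / 2 ^ (n + 1) := by
    apply Nat.eq_of_testBit_eq
    intro k
    rw [tb_div, tb_div]
    have := htp_high (n + 1 + k) (by omega)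
    rw [htp] at this
    exact (hfdef ▸ this).symm
  intro x
  set g : ℕ → Bool := fun j => (x * 2 ^ (n + 1) + i).testBit j with hgdef
  have hkey := key g t0
  rw [hrun] at hkey
  simp only [Sum.elim_inr] at hkey
  have hfg : (fun j => if j ≤ n then f j else g j) = g := by
    funext j
    by_cases hj : j ≤ n
    · simp [hj, hfdef, hgdef, tb_low x i j hj]
    · simp [hj]
  rw [hfg] at hkey
  refine ⟨t0, _, hkey, ?_⟩
  intro j
  by_cases hj : j ≤ n
  · simp only [hj, if_pos]
    rw [htp j, tb_low x r j hj]
  · simp only [hj, if_neg, if_false]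
    push_neg at hj
    have h1 : (x * 2 ^ (n + 1) + i).testBit j = (x + i / 2 ^ (n + 1)).testBit (j - (n + 1)) := by
      rw [← tb_div_add x i, tb_div]
      congr 1; omega
    have h2 : (x * 2 ^ (n + 1) + r).testBit j = (x + r / 2 ^ (n + 1)).testBit (j - (n + 1)) := by
      rw [← tb_div_add x r, tb_div]
      congr 1; omega
    rw [hgdef]
    simp only [h1, h2, hir]
end

section
/- Let f : ℕ → ℕ be computed by a one-sided Turing machine with binary input convention, and suppose f is total. Then f cannot be the function x ↦ 2x (doubling), since by the Strips Theorem every total f computed this way satisfies f(x·2^(n+1)+i) = x·2^(n+1)+f(i) on each strip, forcing f to have slope 1 on infinitely many inputs, while doubling has slope 2 everywhere. -/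
lemma run_inr_stable {σ : Type} (M : TM σ) (c : Cfg σ) (s : ℕ) (tp : ℕ → Bool)
    (h : M.run c s = Sum.inr tp) : ∀ k, M.run c (s + k) = Sum.inr tp := by
  intro k
  induction k with
  | zero => exact h
  | succ k ih => rw [show s + (k+1) = (s+k) + 1 from rfl, TM.run, ih]

lemma run_det {σ : Type} (M : TM σ) (c : Cfg σ) {a b : ℕ} {tp tp' : ℕ → Bool}
    (ha : M.run c a = Sum.inr tp) (hb : M.run c b = Sum.inr tp') : tp = tp' := by
  rcases le_total a b with h | h
  · have := run_inr_stable M c a tp ha (b - a)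
    rw [Nat.add_sub_cancel' h] at this
    rw [this] at hb; exact (Sum.inr.inj hb)
  · have := run_inr_stable M c b tp' hb (a - b)
    rw [Nat.add_sub_cancel' h] at this
    rw [this] at ha; exact (Sum.inr.inj ha).symm

lemma sim {σ : Type} (M : TM σ) (n i i' : ℕ)
    (hlow : ∀ j, j ≤ n → Nat.testBit i j = Nat.testBit i' j) :
    ∀ s, s ≤ n →
      (∃ c c', M.run (initCfg M i) s = Sum.inl c ∧ M.run (initCfg M i') s = Sum.inl c' ∧
        c.state = c'.state ∧ c.pos = c'.pos ∧ c.pos ≤ s ∧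
        (∀ j, j ≤ n → c.tape j = c'.tape j) ∧
        (∀ j, n < j → c.tape j = Nat.testBit i j ∧ c'.tape j = Nat.testBit i' j))
      ∨ (∃ tp tp', M.run (initCfg M i) s = Sum.inr tp ∧ M.run (initCfg M i') s = Sum.inr tp' ∧
        (∀ j, j ≤ n → tp j = tp' j) ∧
        (∀ j, n < j → tp j = Nat.testBit i j ∧ tp' j = Nat.testBit i' j)) := by
  intro s
  induction s with
  | zero =>
    intro _
    left
    refine ⟨initCfg M i, initCfg M i', rfl, rfl, rfl, rfl, le_refl 0, ?_, ?_⟩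
    · intro j hj; exact hlow j hj
    · intro j _; exact ⟨rfl, rfl⟩
  | succ s ih =>
    intro hs
    rcases ih (Nat.le_of_succ_le hs) with
      ⟨c, c', h1, h2, hst, hpos, hps, hag, hhigh⟩ | ⟨tp, tp', h1, h2, hag, hhigh⟩
    · -- step
      have hread : c.tape c.pos = c'.tape c'.pos := by
        rw [← hpos]; exact hag c.pos (le_trans hps (le_trans (Nat.le_of_succ_le hs) (le_refl n)))
      have hposn : c.pos ≤ n := le_trans hps (Nat.le_of_succ_le hs)
      set r := M.trans c.state (c.tape c.pos) with hr
      have hr' : M.trans c'.state (c'.tape c'.pos) = r := by rw [← hst, ← hread]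
      have htape : ∀ j, j ≤ n →
          Function.update c.tape c.pos r.1 j = Function.update c'.tape c'.pos r.1 j := by
        intro j hj
        rw [← hpos]
        by_cases hjp : j = c.pos
        · subst hjp; simp [Function.update_self]
        · rw [Function.update_of_ne hjp, Function.update_of_ne hjp]; exact hag j hj
      have htapeh : ∀ j, n < j →
          Function.update c.tape c.pos r.1 j = Nat.testBit i j ∧
          Function.update c'.tape c'.pos r.1 j = Nat.testBit i' j := by
        intro j hj
        have hne : j ≠ c.pos := by omega
        have hne' : j ≠ c'.pos := by rw [← hpos]; omega
        rw [Function.update_of_ne hne, Function.update_of_ne hne']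
        exact hhigh j hj
      rw [TM.run, h1, TM.run, h2]
      dsimp only
      by_cases hmv : r.2.1
      · by_cases h0 : c.pos = 0
        · have h0' : c'.pos = 0 := hpos ▸ h0
          have e1 : M.stepA c = Sum.inr (Function.update c.tape c.pos r.1) := by
            unfold TM.stepA; rw [← hr]; simp [hmv, h0]
          have e2 : M.stepA c' = Sum.inr (Function.update c'.tape c'.pos r.1) := by
            unfold TM.stepA; rw [hr']; simp [hmv, h0']
          right
          exact ⟨_, _, e1, e2, htape, htapeh⟩
        · have h0' : ¬ c'.pos = 0 := hpos ▸ h0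
          have e1 : M.stepA c = Sum.inl ⟨r.2.2, c.pos - 1, Function.update c.tape c.pos r.1⟩ := by
            unfold TM.stepA; rw [← hr]; simp [hmv, h0]
          have e2 : M.stepA c' = Sum.inl ⟨r.2.2, c'.pos - 1, Function.update c'.tape c'.pos r.1⟩ := by
            unfold TM.stepA; rw [hr']; simp [hmv, h0']
          left
          exact ⟨_, _, e1, e2, rfl, by simp [hpos], by simp; omega, htape, htapeh⟩
      · have e1 : M.stepA c = Sum.inl ⟨r.2.2, c.pos + 1, Function.update c.tape c.pos r.1⟩ := by
          unfold TM.stepA; rw [← hr]; simp [hmv]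
        have e2 : M.stepA c' = Sum.inl ⟨r.2.2, c'.pos + 1, Function.update c'.tape c'.pos r.1⟩ := by
          unfold TM.stepA; rw [hr']; simp [hmv]
        left
        exact ⟨_, _, e1, e2, rfl, by simp [hpos], by simp; omega, htape, htapeh⟩
    · right
      rw [TM.run, h1, TM.run, h2]
      exact ⟨tp, tp', rfl, rfl, hag, hhigh⟩

/-- No one-sided Turing machine with the binary input convention computes the
total doubling function `x ↦ 2x`: by the Strips Theorem such a machine satisfies
`f(x·2^(n+1)+i) = x·2^(n+1)+f(i)` on each strip (slope 1), while doubling has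
slope 2 everywhere. -/
theorem doubling_not_computable {σ : Type} (M : TM σ) :
    ¬ ∀ i : ℕ, ComputesOn M i (2 * i) := by
  intro h
  obtain ⟨t, tp, ht, htp⟩ := h 0
  set n := t with hn
  have hlow : ∀ j, j ≤ n → Nat.testBit 0 j = Nat.testBit (2^(n+1)) j := by
    intro j hj
    rw [Nat.zero_testBit, Nat.testBit_two_pow]
    simp; omega
  rcases sim M n 0 (2^(n+1)) hlow n (le_refl n) with
    ⟨c, c', h1, _, _⟩ | ⟨tp0, tp', h1, h2, hag, hhigh⟩
  · rw [ht] at h1; exact absurd h1 (by simp)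
  · rw [ht] at h1
    have htp0 : tp0 = tp := (Sum.inr.inj h1).symm ▸ rfl
    obtain ⟨t2, tp2, h3, htp2⟩ := h (2^(n+1))
    have hdet : tp' = tp2 := run_det M _ h2 h3
    have hbits : ∀ j, Nat.testBit (2 * 2^(n+1)) j = Nat.testBit (2^(n+1)) j := by
      intro j
      rw [← htp2 j, ← hdet]
      by_cases hj : j ≤ n
      · rw [← hag j hj, htp0, htp j, Nat.zero_testBit, Nat.testBit_two_pow]
        simp; omega
      · exact (hhigh j (by omega)).2
    have : 2 * 2^(n+1) = 2^(n+1) := Nat.eq_of_testBit_eq hbits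
    have hp : 0 < 2^(n+1) := Nat.pow_pos (by norm_num)
    omega
end
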